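/- Let $\mathfrak{O}$ be the ring of integers of a finite extension of $\mathbb{Q}_p$ with maximal ideal $\mathfrak{M}$, residue field of size $q > 3$, and uniformizer $\pi$. For $n \geq 1$ let $J_n^+ := \begin{pmatrix}\mathfrak{O}^{\times} & \mathfrak{O} \\ \mathfrak{M}^{n+1} & \mathfrak{O}^{\times}\end{pmatrix} \cap \mathrm{SL}_2(\mathfrak{O})$. Then the Frattini quotient of $J_n^+$ (the quotient by the closure of $(J_n^+)^p [J_n^+, J_n^+]$) is isomorphic, as an abelian group, to $(1+\mathfrak{M})\big/\big((1+\mathfrak{M}^{n+1})(1+\mathfrak{M})^p\big)$, via the map induced by $1 + \pi x \mapsto \mathrm{diag}(1+\pi x, (1+\pi x)^{-1})$. In particular, for $n = 0$ (the Iwahori subgroup $J = J_0^+$), the Frattini quotient is trivial. -/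

import Mathlib

open IsLocalRing

/-- The congruence subgroup `Jₙ⁺ = (𝒪ˣ, 𝒪; 𝔐ⁿ⁺¹, 𝒪ˣ) ∩ SL₂(𝒪)` of `SL₂(𝒪)`: matrices
whose lower-left entry lies in the ideal `I` (applied with `I = 𝔐^(n+1)`). -/
def lowerCong (𝒪 : Type*) [CommRing 𝒪] (I : Ideal 𝒪) :
    Subgroup (Matrix.SpecialLinearGroup (Fin 2) 𝒪) where
  carrier := {g | g 1 0 ∈ I}
  one_mem' := by
    show ((1 : Matrix.SpecialLinearGroup (Fin 2) 𝒪) : Matrix (Fin 2) (Fin 2) 𝒪) 1 0 ∈ I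
    simp
  mul_mem' := by
    intro a b ha hb
    show ((a * b : Matrix.SpecialLinearGroup (Fin 2) 𝒪) :
      Matrix (Fin 2) (Fin 2) 𝒪) 1 0 ∈ I
    rw [Matrix.SpecialLinearGroup.coe_mul, Matrix.mul_apply, Fin.sum_univ_two]
    exact I.add_mem (I.mul_mem_right _ ha) (I.mul_mem_left _ hb)
  inv_mem' := by
    intro a ha
    show ((a⁻¹ : Matrix.SpecialLinearGroup (Fin 2) 𝒪) : Matrix (Fin 2) (Fin 2) 𝒪) 1 0 ∈ I
    rw [Matrix.SpecialLinearGroup.coe_inv, Matrix.adjugate_fin_two]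
    simpa using I.neg_mem ha

/-- The subgroup `1 + I` of `𝒪ˣ`: units congruent to `1` modulo the ideal `I`
(as the kernel of `𝒪ˣ → (𝒪/I)ˣ`).  For `I = 𝔐` this is `1 + 𝔐`, for `I = 𝔐^(n+1)` it
is `1 + 𝔐^(n+1)`. -/
def principalUnits (𝒪 : Type*) [CommRing 𝒪] (I : Ideal 𝒪) : Subgroup 𝒪ˣ :=
  MonoidHom.ker (Units.map (Ideal.Quotient.mk I).toMonoidHom)

/-- The Frattini subgroup `Φ(G) = [G,G]·Gᵖ` of a pro-`p` group `G` (here realized as the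
normal closure of the set of commutators and `p`-th powers; for the groups considered in
the statement this subgroup is closed, so it agrees with the topological Frattini
subgroup `closure ([G,G]Gᵖ)`). -/
def frattiniP (G : Type*) [Group G] (p : ℕ) : Subgroup G :=
  Subgroup.normalClosure
    {x : G | (∃ a b : G, x = a * b * a⁻¹ * b⁻¹) ∨ ∃ a : G, x = a ^ p}

instance frattiniP_normal (G : Type*) [Group G] (p : ℕ) : (frattiniP G p).Normal :=
  Subgroup.normalClosure_normal

/-- The diagonal matrix `diag(u, u⁻¹)` as an element of `SL₂(𝒪)`. -/
def diagSL (𝒪 : Type*) [CommRing 𝒪] (u : 𝒪ˣ) : Matrix.SpecialLinearGroup (Fin 2) 𝒪 :=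
  ⟨!![(u : 𝒪), 0; 0, ((u⁻¹ : 𝒪ˣ) : 𝒪)], by simp [Matrix.det_fin_two_of]⟩

/-- `diag(u, u⁻¹)` as an element of the subgroup `lowerCong 𝒪 I`. -/
def diagJ (𝒪 : Type*) [CommRing 𝒪] (I : Ideal 𝒪) (u : 𝒪ˣ) : ↥(lowerCong 𝒪 I) :=
  ⟨diagSL 𝒪 u, by
    show ((diagSL 𝒪 u : Matrix.SpecialLinearGroup (Fin 2) 𝒪) :
      Matrix (Fin 2) (Fin 2) 𝒪) 1 0 ∈ I
    simp [diagSL]⟩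

namespace S19

variable {𝒪 : Type*} [CommRing 𝒪] {I : Ideal 𝒪}

lemma mem_lowerCong {g : Matrix.SpecialLinearGroup (Fin 2) 𝒪} :
    g ∈ lowerCong 𝒪 I ↔ (g : Matrix (Fin 2) (Fin 2) 𝒪) 1 0 ∈ I := Iff.rfl

/-- upper unipotent -/
def upJ (I : Ideal 𝒪) (b : 𝒪) : ↥(lowerCong 𝒪 I) :=
  ⟨⟨!![1, b; 0, 1], by simp [Matrix.det_fin_two_of]⟩, by
    show (_ : Matrix (Fin 2) (Fin 2) 𝒪) 1 0 ∈ I; simp⟩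

/-- lower unipotent -/
def loJ (I : Ideal 𝒪) (c : 𝒪) (hc : c ∈ I) : ↥(lowerCong 𝒪 I) :=
  ⟨⟨!![1, 0; c, 1], by simp [Matrix.det_fin_two_of]⟩, by
    show (_ : Matrix (Fin 2) (Fin 2) 𝒪) 1 0 ∈ I; simpa⟩

lemma jext {g h : ↥(lowerCong 𝒪 I)}
    (H : ∀ i j, ((g : Matrix.SpecialLinearGroup (Fin 2) 𝒪) : Matrix (Fin 2) (Fin 2) 𝒪) i j =
      ((h : Matrix.SpecialLinearGroup (Fin 2) 𝒪) : Matrix (Fin 2) (Fin 2) 𝒪) i j) : g = h :=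
  Subtype.ext (Matrix.SpecialLinearGroup.ext _ _ H)

lemma upJ_coe (b : 𝒪) : (((upJ I b : ↥(lowerCong 𝒪 I)) : Matrix.SpecialLinearGroup (Fin 2) 𝒪) :
    Matrix (Fin 2) (Fin 2) 𝒪) = !![1, b; 0, 1] := rfl

lemma loJ_coe (c : 𝒪) (hc : c ∈ I) : (((loJ I c hc : ↥(lowerCong 𝒪 I)) :
    Matrix.SpecialLinearGroup (Fin 2) 𝒪) : Matrix (Fin 2) (Fin 2) 𝒪) = !![1, 0; c, 1] := rfl

lemma diagJ_coe (u : 𝒪ˣ) : (((diagJ 𝒪 I u : ↥(lowerCong 𝒪 I)) :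
    Matrix.SpecialLinearGroup (Fin 2) 𝒪) : Matrix (Fin 2) (Fin 2) 𝒪) =
      !![(u : 𝒪), 0; 0, ((u⁻¹ : 𝒪ˣ) : 𝒪)] := rfl

lemma up_mul (b b' : 𝒪) : upJ I b * upJ I b' = upJ I (b + b') := by
  apply jext; intro i j
  fin_cases i <;> fin_cases j <;>
    simp [upJ_coe, Matrix.mul_apply, Fin.sum_univ_two, Subgroup.coe_mul, Matrix.SpecialLinearGroup.coe_mul] <;> ring

lemma up_zero : upJ I 0 = 1 := by
  apply jext; intro i j
  fin_cases i <;> fin_cases j <;> simp [upJ, Matrix.one_apply]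

lemma up_inv (b : 𝒪) : (upJ I b)⁻¹ = upJ I (-b) := by
  apply inv_eq_of_mul_eq_one_right
  rw [up_mul]; simpa using up_zero

lemma lo_mul (c c' : 𝒪) (hc : c ∈ I) (hc' : c' ∈ I) :
    loJ I c hc * loJ I c' hc' = loJ I (c + c') (I.add_mem hc hc') := by
  apply jext; intro i j
  fin_cases i <;> fin_cases j <;>
    simp [loJ_coe, Matrix.mul_apply, Fin.sum_univ_two, Subgroup.coe_mul, Matrix.SpecialLinearGroup.coe_mul] <;> ring

lemma lo_zero : loJ I 0 I.zero_mem = 1 := by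
  apply jext; intro i j
  fin_cases i <;> fin_cases j <;> simp [loJ, Matrix.one_apply]

lemma lo_inv (c : 𝒪) (hc : c ∈ I) : (loJ I c hc)⁻¹ = loJ I (-c) (I.neg_mem hc) := by
  apply inv_eq_of_mul_eq_one_right
  rw [lo_mul]; simpa using lo_zero


variable {𝒪 : Type*} [CommRing 𝒪] {I : Ideal 𝒪}

lemma diag_up (x : 𝒪ˣ) (b : 𝒪) :
    diagJ 𝒪 I x * upJ I b = upJ I ((x : 𝒪) * (x : 𝒪) * b) * diagJ 𝒪 I x := by
  have h : (x : 𝒪) * ((x⁻¹ : 𝒪ˣ) : 𝒪) = 1 := x.mul_inv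
  apply jext; intro i j
  fin_cases i <;> fin_cases j <;>
    simp [upJ_coe, diagJ_coe, Matrix.mul_apply, Fin.sum_univ_two, Subgroup.coe_mul, Matrix.SpecialLinearGroup.coe_mul] <;>
    linear_combination (-((x : 𝒪) * b)) * h

lemma diag_lo (x : 𝒪ˣ) (c : 𝒪) (hc : c ∈ I) :
    diagJ 𝒪 I x * loJ I c hc =
      loJ I (((x⁻¹ : 𝒪ˣ) : 𝒪) * ((x⁻¹ : 𝒪ˣ) : 𝒪) * c)
        (I.mul_mem_left _ hc) * diagJ 𝒪 I x := by
  have h : (x : 𝒪) * ((x⁻¹ : 𝒪ˣ) : 𝒪) = 1 := x.mul_inv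
  apply jext; intro i j
  fin_cases i <;> fin_cases j <;>
    simp [loJ_coe, diagJ_coe, Matrix.mul_apply, Fin.sum_univ_two, Subgroup.coe_mul, Matrix.SpecialLinearGroup.coe_mul] <;>
    linear_combination (-(((x⁻¹ : 𝒪ˣ) : 𝒪) * c)) * h

/-- four-factor decomposition of `diag(u,u⁻¹)` into unipotents, for `u = 1 + m` -/
lemma four_factor (u : 𝒪ˣ) (m : 𝒪) (hm : m ∈ I) (hum : (u : 𝒪) = 1 + m) :
    upJ I (-(u : 𝒪)) * loJ I (-(((u⁻¹ : 𝒪ˣ) : 𝒪) * m)) (I.neg_mem (I.mul_mem_left _ hm)) *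
      upJ I 1 * loJ I m hm = diagJ 𝒪 I u := by
  have h : (u : 𝒪) * ((u⁻¹ : 𝒪ˣ) : 𝒪) = 1 := u.mul_inv
  apply jext; intro i j
  fin_cases i <;> fin_cases j
  · simp [upJ_coe, loJ_coe, diagJ_coe, Matrix.mul_apply, Fin.sum_univ_two, Subgroup.coe_mul, Matrix.SpecialLinearGroup.coe_mul]
    linear_combination (-(1 + m)) * hum
  · simp [upJ_coe, loJ_coe, diagJ_coe, Matrix.mul_apply, Fin.sum_univ_two, Subgroup.coe_mul, Matrix.SpecialLinearGroup.coe_mul]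
    linear_combination (-1 : 𝒪) * hum
  · simp [upJ_coe, loJ_coe, diagJ_coe, Matrix.mul_apply, Fin.sum_univ_two, Subgroup.coe_mul, Matrix.SpecialLinearGroup.coe_mul]
    linear_combination (-m) * h + m * ((u⁻¹ : 𝒪ˣ) : 𝒪) * hum
  · simp [upJ_coe, loJ_coe, diagJ_coe, Matrix.mul_apply, Fin.sum_univ_two, Subgroup.coe_mul, Matrix.SpecialLinearGroup.coe_mul]
    linear_combination (-1 : 𝒪) * h + ((u⁻¹ : 𝒪ˣ) : 𝒪) * hum

lemma ldu_mat (a y b c d : 𝒪) (h : a * y = 1) (hdet : a * d - b * c = 1) :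
    !![1, 0; c * y, 1] * !![a, 0; 0, y] * !![1, y * b; 0, 1] = !![a, b; c, d] := by
  ext i j
  fin_cases i <;> fin_cases j
  · simp [Matrix.mul_apply, Fin.sum_univ_two]
  · simp [Matrix.mul_apply, Fin.sum_univ_two]
    linear_combination b * h
  · simp [Matrix.mul_apply, Fin.sum_univ_two]
    linear_combination c * h
  · simp [Matrix.mul_apply, Fin.sum_univ_two]
    linear_combination (c * b * y + d) * h - y * hdet

/-- LDU decomposition of an element of `lowerCong` -/
lemma ldu (g : ↥(lowerCong 𝒪 I)) (a : 𝒪ˣ)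
    (ha : (a : 𝒪) = ((g : Matrix.SpecialLinearGroup (Fin 2) 𝒪) : Matrix (Fin 2) (Fin 2) 𝒪) 0 0) :
    g = loJ I (((g : Matrix.SpecialLinearGroup (Fin 2) 𝒪) : Matrix (Fin 2) (Fin 2) 𝒪) 1 0 *
          ((a⁻¹ : 𝒪ˣ) : 𝒪)) (I.mul_mem_right _ g.2) *
        diagJ 𝒪 I a *
        upJ I (((a⁻¹ : 𝒪ˣ) : 𝒪) *
          ((g : Matrix.SpecialLinearGroup (Fin 2) 𝒪) : Matrix (Fin 2) (Fin 2) 𝒪) 0 1) := by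
  have h : (a : 𝒪) * ((a⁻¹ : 𝒪ˣ) : 𝒪) = 1 := a.mul_inv
  have hdet : (a : 𝒪) *
      ((g : Matrix.SpecialLinearGroup (Fin 2) 𝒪) : Matrix (Fin 2) (Fin 2) 𝒪) 1 1 -
      ((g : Matrix.SpecialLinearGroup (Fin 2) 𝒪) : Matrix (Fin 2) (Fin 2) 𝒪) 0 1 *
      ((g : Matrix.SpecialLinearGroup (Fin 2) 𝒪) : Matrix (Fin 2) (Fin 2) 𝒪) 1 0 = 1 := by
    rw [ha, ← Matrix.det_fin_two]
    exact (g : Matrix.SpecialLinearGroup (Fin 2) 𝒪).2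
  refine Subtype.ext (Subtype.ext ?_)
  have key := ldu_mat (a : 𝒪) ((a⁻¹ : 𝒪ˣ) : 𝒪)
    (((g : Matrix.SpecialLinearGroup (Fin 2) 𝒪) : Matrix (Fin 2) (Fin 2) 𝒪) 0 1)
    (((g : Matrix.SpecialLinearGroup (Fin 2) 𝒪) : Matrix (Fin 2) (Fin 2) 𝒪) 1 0)
    (((g : Matrix.SpecialLinearGroup (Fin 2) 𝒪) : Matrix (Fin 2) (Fin 2) 𝒪) 1 1) h hdet
  refine (Matrix.eta_fin_two _).trans ?_
  rw [← ha]
  refine key.symm.trans ?_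
  simp [loJ_coe, upJ_coe, diagJ_coe, Subgroup.coe_mul, Matrix.SpecialLinearGroup.coe_mul]


variable {𝒪 : Type*} [CommRing 𝒪] {I : Ideal 𝒪}

lemma comm_mem_phi {G : Type*} [Group G] (p : ℕ) (a b : G) :
    a * b * a⁻¹ * b⁻¹ ∈ frattiniP G p :=
  Subgroup.subset_normalClosure (Or.inl ⟨a, b, rfl⟩)

lemma pow_mem_phi {G : Type*} [Group G] (p : ℕ) (a : G) : a ^ p ∈ frattiniP G p :=
  Subgroup.subset_normalClosure (Or.inr ⟨a, rfl⟩)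

lemma mk_pow_p {G : Type*} [Group G] (p : ℕ) (y : G ⧸ frattiniP G p) : y ^ p = 1 := by
  refine QuotientGroup.induction_on y fun g => ?_
  have : ((g : G) : G ⧸ frattiniP G p) ^ p = ((g ^ p : G) : G ⧸ frattiniP G p) :=
    (map_pow (QuotientGroup.mk' (frattiniP G p)) g p).symm
  rw [this, QuotientGroup.eq_one_iff]
  exact pow_mem_phi p g

lemma up_comm (p : ℕ) (x : 𝒪ˣ) (b : 𝒪) :
    diagJ 𝒪 I x * upJ I b * (diagJ 𝒪 I x)⁻¹ * (upJ I b)⁻¹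
      = upJ I (((x : 𝒪) * (x : 𝒪) - 1) * b) := by
  rw [diag_up, mul_inv_cancel_right, up_inv, up_mul]
  congr 1
  ring

lemma lo_comm (p : ℕ) (x : 𝒪ˣ) (c : 𝒪) (hc : c ∈ I) :
    diagJ 𝒪 I x * loJ I c hc * (diagJ 𝒪 I x)⁻¹ * (loJ I c hc)⁻¹
      = loJ I ((((x⁻¹ : 𝒪ˣ) : 𝒪) * ((x⁻¹ : 𝒪ˣ) : 𝒪) - 1) * c)
        (I.mul_mem_left _ hc) := by
  rw [diag_lo, mul_inv_cancel_right, lo_inv, lo_mul]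
  congr 1
  ring

lemma up_congr {b b' : 𝒪} (h : b = b') : upJ I b = upJ I b' := by rw [h]

lemma lo_congr {c c' : 𝒪} (h : c = c') (hc : c ∈ I) (hc' : c' ∈ I) :
    loJ I c hc = loJ I c' hc' := by subst h; rfl

lemma up_mem_phi (p : ℕ) (x : 𝒪ˣ) (hx : IsUnit ((x : 𝒪) * (x : 𝒪) - 1)) (b : 𝒪) :
    upJ I b ∈ frattiniP (↥(lowerCong 𝒪 I)) p := by
  obtain ⟨e, he⟩ : ∃ e : 𝒪ˣ, (e : 𝒪) = (x : 𝒪) * (x : 𝒪) - 1 := ⟨hx.unit, hx.unit_spec⟩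
  have key : upJ I b = diagJ 𝒪 I x * upJ I ((e⁻¹ : 𝒪ˣ) * b) * (diagJ 𝒪 I x)⁻¹ *
      (upJ I ((e⁻¹ : 𝒪ˣ) * b))⁻¹ := by
    rw [up_comm p]
    apply up_congr
    rw [← he, ← mul_assoc, Units.mul_inv, one_mul]
  rw [key]
  exact comm_mem_phi p _ _

lemma lo_mem_phi (p : ℕ) (x : 𝒪ˣ) (hx : IsUnit ((x : 𝒪) * (x : 𝒪) - 1)) (c : 𝒪) (hc : c ∈ I) :
    loJ I c hc ∈ frattiniP (↥(lowerCong 𝒪 I)) p := by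
  have hy : IsUnit (((x⁻¹ : 𝒪ˣ) : 𝒪) * ((x⁻¹ : 𝒪ˣ) : 𝒪) - 1) := by
    have hrw : ((x⁻¹ : 𝒪ˣ) : 𝒪) * ((x⁻¹ : 𝒪ˣ) : 𝒪) - 1 =
        -(((x⁻¹ : 𝒪ˣ) : 𝒪) * ((x⁻¹ : 𝒪ˣ) : 𝒪) * ((x : 𝒪) * (x : 𝒪) - 1)) := by
      linear_combination ((x : 𝒪) * ((x⁻¹ : 𝒪ˣ) : 𝒪) + 1) * x.mul_inv
    rw [hrw]
    exact (((x⁻¹ * x⁻¹ : 𝒪ˣ).isUnit.mul hx)).neg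
  obtain ⟨e, he⟩ : ∃ e : 𝒪ˣ, (e : 𝒪) = ((x⁻¹ : 𝒪ˣ) : 𝒪) * ((x⁻¹ : 𝒪ˣ) : 𝒪) - 1 :=
    ⟨hy.unit, hy.unit_spec⟩
  have hc0 : (e⁻¹ : 𝒪ˣ) * c ∈ I := I.mul_mem_left _ hc
  have key : loJ I c hc = diagJ 𝒪 I x * loJ I ((e⁻¹ : 𝒪ˣ) * c) hc0 * (diagJ 𝒪 I x)⁻¹ *
      (loJ I ((e⁻¹ : 𝒪ˣ) * c) hc0)⁻¹ := by
    rw [lo_comm p]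
    apply lo_congr
    rw [← he, ← mul_assoc, Units.mul_inv, one_mul]
  rw [key]
  exact comm_mem_phi p _ _

lemma diag_mul (u v : 𝒪ˣ) : diagJ 𝒪 I (u * v) = diagJ 𝒪 I u * diagJ 𝒪 I v := by
  apply jext; intro i j
  fin_cases i <;> fin_cases j <;>
    simp [diagJ_coe, Matrix.mul_apply, Fin.sum_univ_two, mul_inv_rev, Subgroup.coe_mul, Matrix.SpecialLinearGroup.coe_mul] <;> ring

/-- `diag` as a group hom `𝒪ˣ →* lowerCong 𝒪 I`. -/
def dHom (𝒪 : Type*) [CommRing 𝒪] (I : Ideal 𝒪) : 𝒪ˣ →* ↥(lowerCong 𝒪 I) :=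
  MonoidHom.mk' (fun u => diagJ 𝒪 I u) diag_mul

lemma diag_mem_phi (p : ℕ) (x : 𝒪ˣ) (hx : IsUnit ((x : 𝒪) * (x : 𝒪) - 1)) (u : 𝒪ˣ)
    (hu : (u : 𝒪) - 1 ∈ I) : diagJ 𝒪 I u ∈ frattiniP (↥(lowerCong 𝒪 I)) p := by
  rw [← four_factor u ((u : 𝒪) - 1) hu (by ring)]
  exact Subgroup.mul_mem _ (Subgroup.mul_mem _ (Subgroup.mul_mem _
    (up_mem_phi p x hx _) (lo_mem_phi p x hx _ _)) (up_mem_phi p x hx _))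
    (lo_mem_phi p x hx _ _)

lemma mem_principalUnits_iff {u : 𝒪ˣ} : u ∈ principalUnits 𝒪 I ↔ (u : 𝒪) - 1 ∈ I := by
  have h1 : u ∈ principalUnits 𝒪 I ↔
      Ideal.Quotient.mk I (u : 𝒪) = Ideal.Quotient.mk I (1 : 𝒪) := by
    rw [principalUnits, MonoidHom.mem_ker, Units.ext_iff]
    simp
  rw [h1, Ideal.Quotient.eq]


open IsLocalRing

variable {𝒪 : Type*} [CommRing 𝒪] [IsLocalRing 𝒪]

lemma unit_of_residue_ne_zero {z : 𝒪} (hz : IsLocalRing.residue 𝒪 z ≠ 0) : IsUnit z := by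
  by_contra hz'
  exact hz (Ideal.Quotient.eq_zero_iff_mem.mpr
    ((IsLocalRing.mem_maximalIdeal _).mpr (mem_nonunits_iff.mpr hz')))

lemma exists_special_unit (hq : 3 < Nat.card (ResidueField 𝒪)) :
    ∃ x : 𝒪ˣ, IsUnit ((x : 𝒪) * (x : 𝒪) - 1) := by
  have hfin : Finite (ResidueField 𝒪) := Nat.finite_of_card_ne_zero (by omega)
  obtain ⟨A, h0, h1, h2⟩ : ∃ A : ResidueField 𝒪, A ≠ 0 ∧ A ≠ 1 ∧ A ≠ -1 := by
    by_contra hcon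
    push_neg at hcon
    have hle : Nat.card (ResidueField 𝒪) ≤ 3 := by
      classical
      haveI := Fintype.ofFinite (ResidueField 𝒪)
      rw [Nat.card_eq_fintype_card]
      have hsub : (Finset.univ : Finset (ResidueField 𝒪)) ⊆ {0, 1, -1} := by
        intro A _
        by_cases hA0 : A = 0
        · simp [hA0]
        by_cases hA1 : A = 1
        · simp [hA1]
        · simp [hcon A hA0 hA1]
      calc Fintype.card (ResidueField 𝒪) = (Finset.univ : Finset (ResidueField 𝒪)).card :=
            rfl
        _ ≤ ({0, 1, -1} : Finset (ResidueField 𝒪)).card := Finset.card_le_card hsub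
        _ ≤ 3 := by
            refine (Finset.card_insert_le _ _).trans (Nat.succ_le_succ ?_)
            refine (Finset.card_insert_le _ _).trans (Nat.succ_le_succ ?_)
            simp
    omega
  obtain ⟨y, hy⟩ := IsLocalRing.residue_surjective (R := 𝒪) A
  have hyu : IsUnit y := unit_of_residue_ne_zero (by rw [hy]; exact h0)
  have hy1 : IsUnit (y - 1) := unit_of_residue_ne_zero (by
    rw [map_sub, map_one, hy]
    intro h
    exact h1 (by rwa [sub_eq_zero] at h))
  have hy2 : IsUnit (y + 1) := unit_of_residue_ne_zero (by
    rw [map_add, map_one, hy]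
    intro h
    exact h2 (eq_neg_of_add_eq_zero_left h))
  refine ⟨hyu.unit, ?_⟩
  rw [hyu.unit_spec, show y * y - 1 = (y - 1) * (y + 1) by ring]
  exact hy1.mul hy2

lemma pow_card_sub_one_mem (hfin : Finite (ResidueField 𝒪)) (a : 𝒪ˣ) :
    a ^ (Nat.card (ResidueField 𝒪) - 1) ∈ principalUnits 𝒪 (maximalIdeal 𝒪) := by
  have key : (Units.map (IsLocalRing.residue 𝒪).toMonoidHom) a ^
      (Nat.card (ResidueField 𝒪) - 1) = 1 := by
    rw [show Nat.card (ResidueField 𝒪) - 1 = Nat.card (ResidueField 𝒪)ˣ from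
      (Nat.card_units _).symm]
    exact pow_card_eq_one'
  rw [← map_pow] at key
  have key2 : IsLocalRing.residue 𝒪 ((a ^ (Nat.card (ResidueField 𝒪) - 1) : 𝒪ˣ) : 𝒪) =
      IsLocalRing.residue 𝒪 1 := by
    rw [map_one]
    calc IsLocalRing.residue 𝒪 ((a ^ (Nat.card (ResidueField 𝒪) - 1) : 𝒪ˣ) : 𝒪)
        = ((Units.map (IsLocalRing.residue 𝒪).toMonoidHom)
            (a ^ (Nat.card (ResidueField 𝒪) - 1)) : ResidueField 𝒪) := rfl
      _ = 1 := by rw [key]; rfl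
  rw [mem_principalUnits_iff]
  exact Ideal.Quotient.eq.mp key2

lemma exists_st (p : ℕ) (hp : p.Prime) (hchar : CharP (ResidueField 𝒪) p)
    (hq : 3 < Nat.card (ResidueField 𝒪)) :
    ∃ s t : ℕ, (Nat.card (ResidueField 𝒪) - 1) * s = p * t + 1 := by
  have hfin : Finite (ResidueField 𝒪) := Nat.finite_of_card_ne_zero (by omega)
  classical
  haveI := Fintype.ofFinite (ResidueField 𝒪)
  haveI := hchar
  obtain ⟨n, -, hcard⟩ := FiniteField.card (ResidueField 𝒪) p
  have hqf : Nat.card (ResidueField 𝒪) = p ^ (n : ℕ) := by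
    rw [Nat.card_eq_fintype_card]; exact hcard
  have hpq : p ∣ Nat.card (ResidueField 𝒪) := by
    rw [hqf]; exact dvd_pow_self p n.pos.ne'
  have hnd : ¬ p ∣ (Nat.card (ResidueField 𝒪) - 1) := by
    intro h
    have h2 := Nat.dvd_sub hpq h
    rw [show Nat.card (ResidueField 𝒪) - (Nat.card (ResidueField 𝒪) - 1) = 1 by omega] at h2
    have h3 := Nat.le_of_dvd one_pos h2
    have h4 := hp.one_lt
    omega
  have hcop : Nat.Coprime (Nat.card (ResidueField 𝒪) - 1) p :=
    Nat.coprime_comm.mp ((hp.coprime_iff_not_dvd).mpr hnd)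
  obtain ⟨s, -, hs⟩ := Nat.exists_mul_mod_eq_one_of_coprime hcop hp.one_lt
  refine ⟨s, (Nat.card (ResidueField 𝒪) - 1) * s / p, ?_⟩
  have := Nat.div_add_mod ((Nat.card (ResidueField 𝒪) - 1) * s) p
  omega


open IsLocalRing

variable {𝒪 : Type*} [CommRing 𝒪] [IsLocalRing 𝒪]

lemma isUnit00 {I : Ideal 𝒪} (hI : I ≤ maximalIdeal 𝒪) (g : ↥(lowerCong 𝒪 I)) :
    IsUnit (((g : Matrix.SpecialLinearGroup (Fin 2) 𝒪) : Matrix (Fin 2) (Fin 2) 𝒪) 0 0) := by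
  have hdet : ((g : Matrix.SpecialLinearGroup (Fin 2) 𝒪) : Matrix (Fin 2) (Fin 2) 𝒪) 0 0 *
      ((g : Matrix.SpecialLinearGroup (Fin 2) 𝒪) : Matrix (Fin 2) (Fin 2) 𝒪) 1 1 -
      ((g : Matrix.SpecialLinearGroup (Fin 2) 𝒪) : Matrix (Fin 2) (Fin 2) 𝒪) 0 1 *
      ((g : Matrix.SpecialLinearGroup (Fin 2) 𝒪) : Matrix (Fin 2) (Fin 2) 𝒪) 1 0 = 1 := by
    rw [← Matrix.det_fin_two]
    exact (g : Matrix.SpecialLinearGroup (Fin 2) 𝒪).2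
  have hbc : ((g : Matrix.SpecialLinearGroup (Fin 2) 𝒪) : Matrix (Fin 2) (Fin 2) 𝒪) 0 1 *
      ((g : Matrix.SpecialLinearGroup (Fin 2) 𝒪) : Matrix (Fin 2) (Fin 2) 𝒪) 1 0 ∈
      maximalIdeal 𝒪 := Ideal.mul_mem_left _ _ (hI g.2)
  have had : IsUnit (((g : Matrix.SpecialLinearGroup (Fin 2) 𝒪) : Matrix (Fin 2) (Fin 2) 𝒪) 0 0 *
      ((g : Matrix.SpecialLinearGroup (Fin 2) 𝒪) : Matrix (Fin 2) (Fin 2) 𝒪) 1 1) := by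
    by_contra h
    have h1 : _ ∈ maximalIdeal 𝒪 := (IsLocalRing.mem_maximalIdeal _).mpr (mem_nonunits_iff.mpr h)
    have h2 : (1 : 𝒪) ∈ maximalIdeal 𝒪 := by
      have h3 := Ideal.sub_mem _ h1 hbc
      rwa [hdet] at h3
    exact (IsLocalRing.maximalIdeal.isMaximal 𝒪).ne_top
      (Ideal.eq_top_of_isUnit_mem _ h2 isUnit_one)
  exact isUnit_of_mul_isUnit_left had

noncomputable def auU {I : Ideal 𝒪} (hI : I ≤ maximalIdeal 𝒪) (g : ↥(lowerCong 𝒪 I)) : 𝒪ˣ :=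
  (isUnit00 hI g).unit

lemma auU_spec {I : Ideal 𝒪} (hI : I ≤ maximalIdeal 𝒪) (g : ↥(lowerCong 𝒪 I)) :
    ((auU hI g : 𝒪ˣ) : 𝒪) =
      ((g : Matrix.SpecialLinearGroup (Fin 2) 𝒪) : Matrix (Fin 2) (Fin 2) 𝒪) 0 0 :=
  (isUnit00 hI g).unit_spec

lemma auU_rel {I : Ideal 𝒪} (hI : I ≤ maximalIdeal 𝒪) (g h : ↥(lowerCong 𝒪 I)) :
    (auU hI g * auU hI h)⁻¹ * auU hI (g * h) ∈ principalUnits 𝒪 I := by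
  rw [mem_principalUnits_iff]
  have hC : ((auU hI (g * h) : 𝒪ˣ) : 𝒪) =
      ((auU hI g : 𝒪ˣ) : 𝒪) * ((auU hI h : 𝒪ˣ) : 𝒪) +
      ((g : Matrix.SpecialLinearGroup (Fin 2) 𝒪) : Matrix (Fin 2) (Fin 2) 𝒪) 0 1 *
      ((h : Matrix.SpecialLinearGroup (Fin 2) 𝒪) : Matrix (Fin 2) (Fin 2) 𝒪) 1 0 := by
    rw [auU_spec, auU_spec, auU_spec]
    rw [show ((((g * h : ↥(lowerCong 𝒪 I)) : Matrix.SpecialLinearGroup (Fin 2) 𝒪) :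
        Matrix (Fin 2) (Fin 2) 𝒪)) = ((g : Matrix.SpecialLinearGroup (Fin 2) 𝒪) :
        Matrix (Fin 2) (Fin 2) 𝒪) * ((h : Matrix.SpecialLinearGroup (Fin 2) 𝒪) :
        Matrix (Fin 2) (Fin 2) 𝒪) from rfl]
    rw [Matrix.mul_apply, Fin.sum_univ_two]
  have hAB : ((((auU hI g * auU hI h)⁻¹ : 𝒪ˣ) : 𝒪)) *
      (((auU hI g : 𝒪ˣ) : 𝒪) * ((auU hI h : 𝒪ˣ) : 𝒪)) = 1 := by
    have h1 := Units.inv_mul (auU hI g * auU hI h)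
    rwa [Units.val_mul] at h1
  rw [Units.val_mul, hC]
  have heq : (((auU hI g * auU hI h)⁻¹ : 𝒪ˣ) : 𝒪) *
      (((auU hI g : 𝒪ˣ) : 𝒪) * ((auU hI h : 𝒪ˣ) : 𝒪) +
        ((g : Matrix.SpecialLinearGroup (Fin 2) 𝒪) : Matrix (Fin 2) (Fin 2) 𝒪) 0 1 *
        ((h : Matrix.SpecialLinearGroup (Fin 2) 𝒪) : Matrix (Fin 2) (Fin 2) 𝒪) 1 0) - 1 =
      (((auU hI g * auU hI h)⁻¹ : 𝒪ˣ) : 𝒪) *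
        (((g : Matrix.SpecialLinearGroup (Fin 2) 𝒪) : Matrix (Fin 2) (Fin 2) 𝒪) 0 1 *
        ((h : Matrix.SpecialLinearGroup (Fin 2) 𝒪) : Matrix (Fin 2) (Fin 2) 𝒪) 1 0) := by
    linear_combination hAB
  rw [heq]
  exact I.mul_mem_left _ (I.mul_mem_left _ h.2)

noncomputable def pqElt {I : Ideal 𝒪} (hI : I ≤ maximalIdeal 𝒪)
    (hfin : Finite (ResidueField 𝒪)) (s : ℕ) (g : ↥(lowerCong 𝒪 I)) :
    ↥(principalUnits 𝒪 (maximalIdeal 𝒪)) :=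
  (⟨auU hI g ^ (Nat.card (ResidueField 𝒪) - 1), pow_card_sub_one_mem hfin _⟩ :
    ↥(principalUnits 𝒪 (maximalIdeal 𝒪))) ^ s

lemma pqElt_coe {I : Ideal 𝒪} (hI : I ≤ maximalIdeal 𝒪)
    (hfin : Finite (ResidueField 𝒪)) (s : ℕ) (g : ↥(lowerCong 𝒪 I)) :
    ((pqElt hI hfin s g : ↥(principalUnits 𝒪 (maximalIdeal 𝒪))) : 𝒪ˣ) =
      (auU hI g ^ (Nat.card (ResidueField 𝒪) - 1)) ^ s := by
  simp [pqElt, SubmonoidClass.coe_pow]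


open IsLocalRing

variable {𝒪 : Type*} [CommRing 𝒪] [IsLocalRing 𝒪]

/-- every `p`-th power vanishes in the quotient `U₁ ⧸ N` -/
lemma powQ {I : Ideal 𝒪} (p : ℕ)
    (y : ↥(principalUnits 𝒪 (maximalIdeal 𝒪)) ⧸
      ((principalUnits 𝒪 I ⊔ (principalUnits 𝒪 (maximalIdeal 𝒪)).map (powMonoidHom p)).subgroupOf
        (principalUnits 𝒪 (maximalIdeal 𝒪)))) : y ^ p = 1 := by
  refine QuotientGroup.induction_on y fun v => ?_
  rw [show ((v : ↥(principalUnits 𝒪 (maximalIdeal 𝒪)) ⧸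
      ((principalUnits 𝒪 I ⊔ (principalUnits 𝒪 (maximalIdeal 𝒪)).map (powMonoidHom p)).subgroupOf
        (principalUnits 𝒪 (maximalIdeal 𝒪)))) ^ p) = ((v ^ p : _) : _) from
    (map_pow (QuotientGroup.mk' _) v p).symm]
  rw [QuotientGroup.eq_one_iff]
  refine Subgroup.mem_subgroupOf.mpr (Subgroup.mem_sup_right ?_)
  refine Subgroup.mem_map.mpr ⟨(v : 𝒪ˣ), v.2, ?_⟩
  rw [powMonoidHom_apply, SubmonoidClass.coe_pow]

noncomputable def psi0 {I : Ideal 𝒪} (hI : I ≤ maximalIdeal 𝒪)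
    (hfin : Finite (ResidueField 𝒪)) (p s : ℕ) :
    ↥(lowerCong 𝒪 I) →* (↥(principalUnits 𝒪 (maximalIdeal 𝒪)) ⧸
      ((principalUnits 𝒪 I ⊔ (principalUnits 𝒪 (maximalIdeal 𝒪)).map (powMonoidHom p)).subgroupOf
        (principalUnits 𝒪 (maximalIdeal 𝒪)))) :=
  MonoidHom.mk' (fun g => QuotientGroup.mk (pqElt hI hfin s g)) (by
    intro g h
    have hw := auU_rel hI g h
    have hwM : (auU hI g * auU hI h)⁻¹ * auU hI (g * h) ∈ principalUnits 𝒪 (maximalIdeal 𝒪) :=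
      mem_principalUnits_iff.mpr (hI (mem_principalUnits_iff.mp hw))
    have hC : auU hI (g * h) = auU hI g * auU hI h * ((auU hI g * auU hI h)⁻¹ * auU hI (g * h)) :=
      (mul_inv_cancel_left _ _).symm
    have key : pqElt hI hfin s (g * h) = pqElt hI hfin s g * pqElt hI hfin s h *
        ((⟨(auU hI g * auU hI h)⁻¹ * auU hI (g * h), hwM⟩ :
          ↥(principalUnits 𝒪 (maximalIdeal 𝒪))) ^ (Nat.card (ResidueField 𝒪) - 1)) ^ s := by
      apply Subtype.ext
      rw [MulMemClass.coe_mul, MulMemClass.coe_mul, pqElt_coe, pqElt_coe, pqElt_coe,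
        SubmonoidClass.coe_pow, SubmonoidClass.coe_pow]
      conv_lhs => rw [hC]
      rw [mul_pow, mul_pow, mul_pow, mul_pow]
    have hz : ((⟨(auU hI g * auU hI h)⁻¹ * auU hI (g * h), hwM⟩ :
        ↥(principalUnits 𝒪 (maximalIdeal 𝒪))) ^ (Nat.card (ResidueField 𝒪) - 1)) ^ s ∈
        ((principalUnits 𝒪 I ⊔
          (principalUnits 𝒪 (maximalIdeal 𝒪)).map (powMonoidHom p)).subgroupOf
          (principalUnits 𝒪 (maximalIdeal 𝒪))) := by
      refine Subgroup.mem_subgroupOf.mpr ?_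
      rw [SubmonoidClass.coe_pow, SubmonoidClass.coe_pow]
      exact Subgroup.mem_sup_left (Subgroup.pow_mem _ (Subgroup.pow_mem _ hw _) _)
    rw [← QuotientGroup.mk_mul, QuotientGroup.eq]
    have hfin2 : (pqElt hI hfin s (g * h))⁻¹ * (pqElt hI hfin s g * pqElt hI hfin s h) =
        (((⟨(auU hI g * auU hI h)⁻¹ * auU hI (g * h), hwM⟩ :
          ↥(principalUnits 𝒪 (maximalIdeal 𝒪))) ^ (Nat.card (ResidueField 𝒪) - 1)) ^ s)⁻¹ := by
      rw [key]; group
    rw [hfin2]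
    exact Subgroup.inv_mem _ hz)

lemma psi0_apply {I : Ideal 𝒪} (hI : I ≤ maximalIdeal 𝒪)
    (hfin : Finite (ResidueField 𝒪)) (p s : ℕ) (g : ↥(lowerCong 𝒪 I)) :
    psi0 hI hfin p s g = QuotientGroup.mk (pqElt hI hfin s g) := rfl


open IsLocalRing

variable {𝒪 : Type*} [CommRing 𝒪] [IsLocalRing 𝒪]

theorem core (I : Ideal 𝒪) (hI : I ≤ maximalIdeal 𝒪) (p : ℕ) (hp : p.Prime)
    (hchar : CharP (ResidueField 𝒪) p) (hq : 3 < Nat.card (ResidueField 𝒪)) :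
    ∃ e : (↥(principalUnits 𝒪 (maximalIdeal 𝒪)) ⧸
        ((principalUnits 𝒪 I ⊔
          (principalUnits 𝒪 (maximalIdeal 𝒪)).map (powMonoidHom p)).subgroupOf
          (principalUnits 𝒪 (maximalIdeal 𝒪)))) ≃*
      (↥(lowerCong 𝒪 I) ⧸ frattiniP (↥(lowerCong 𝒪 I)) p),
      ∀ u : ↥(principalUnits 𝒪 (maximalIdeal 𝒪)),
        e (QuotientGroup.mk u) = QuotientGroup.mk (diagJ 𝒪 I (↑u)) := by
  obtain ⟨x, hx⟩ := exists_special_unit (𝒪 := 𝒪) hq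
  have hfin : Finite (ResidueField 𝒪) := Nat.finite_of_card_ne_zero (by omega)
  obtain ⟨s, t, hst⟩ := exists_st p hp hchar hq
  -- the homomorphism `U₁ → J/Φ`, `u ↦ diag(u) mod Φ`
  set hom1 : ↥(principalUnits 𝒪 (maximalIdeal 𝒪)) →*
      (↥(lowerCong 𝒪 I) ⧸ frattiniP (↥(lowerCong 𝒪 I)) p) :=
    (QuotientGroup.mk' _).comp ((dHom 𝒪 I).comp (Subgroup.subtype _)) with hom1_def
  have hom1_apply : ∀ u : ↥(principalUnits 𝒪 (maximalIdeal 𝒪)),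
      hom1 u = QuotientGroup.mk (diagJ 𝒪 I (↑u)) := fun u => rfl
  have hkill1 : ((principalUnits 𝒪 I ⊔
      (principalUnits 𝒪 (maximalIdeal 𝒪)).map (powMonoidHom p)).subgroupOf
      (principalUnits 𝒪 (maximalIdeal 𝒪))) ≤ hom1.ker := by
    intro u hu
    rw [Subgroup.mem_subgroupOf, Subgroup.mem_sup] at hu
    obtain ⟨y, hy, z, hz, hyz⟩ := hu
    rw [MonoidHom.mem_ker, hom1_apply, QuotientGroup.eq_one_iff, ← hyz, diag_mul]
    obtain ⟨w, hw, rfl⟩ := Subgroup.mem_map.mp hz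
    have h1 : diagJ 𝒪 I y ∈ frattiniP (↥(lowerCong 𝒪 I)) p :=
      diag_mem_phi p x hx y (mem_principalUnits_iff.mp hy)
    have h2 : diagJ 𝒪 I (powMonoidHom p w) ∈ frattiniP (↥(lowerCong 𝒪 I)) p := by
      have h3 : diagJ 𝒪 I (powMonoidHom p w) = (diagJ 𝒪 I w) ^ p := by
        exact map_pow (dHom 𝒪 I) w p
      rw [h3]
      exact pow_mem_phi p _
    exact Subgroup.mul_mem _ h1 h2
  set φ := QuotientGroup.lift _ hom1 hkill1 with φ_def
  have hkill2 : frattiniP (↥(lowerCong 𝒪 I)) p ≤ (psi0 hI hfin p s).ker := by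
    apply Subgroup.normalClosure_le_normal
    intro v hv
    rcases hv with ⟨a, b, rfl⟩ | ⟨a, rfl⟩
    · rw [SetLike.mem_coe, MonoidHom.mem_ker, map_mul, map_mul, map_mul, map_inv, map_inv,
        mul_comm ((psi0 hI hfin p s) a) ((psi0 hI hfin p s) b), mul_inv_cancel_right,
        mul_inv_cancel]
    · rw [SetLike.mem_coe, MonoidHom.mem_ker, map_pow]
      exact powQ p _
  set ψ := QuotientGroup.lift _ (psi0 hI hfin p s) hkill2 with ψ_def
  -- every element of `J` agrees with its diagonal part mod `Φ`
  have key1 : ∀ g : ↥(lowerCong 𝒪 I),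
      (QuotientGroup.mk g : ↥(lowerCong 𝒪 I) ⧸ frattiniP (↥(lowerCong 𝒪 I)) p) =
      QuotientGroup.mk (diagJ 𝒪 I (auU hI g)) := by
    intro g
    conv_lhs => rw [ldu g (auU hI g) (auU_spec hI g)]
    rw [QuotientGroup.mk_mul, QuotientGroup.mk_mul,
      (QuotientGroup.eq_one_iff _).mpr (lo_mem_phi p x hx _ _),
      (QuotientGroup.eq_one_iff _).mpr (up_mem_phi p x hx _), one_mul, mul_one]
  have h1 : ψ.comp φ = MonoidHom.id _ := by
    apply MonoidHom.ext
    intro y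
    refine QuotientGroup.induction_on y fun u => ?_
    rw [MonoidHom.comp_apply, MonoidHom.id_apply]
    have e1 : φ (QuotientGroup.mk u) = QuotientGroup.mk (diagJ 𝒪 I (↑u)) := by
      rw [φ_def, QuotientGroup.lift_mk', hom1_apply]
    rw [e1]
    have e2 : ψ (QuotientGroup.mk (diagJ 𝒪 I (↑u))) =
        QuotientGroup.mk (pqElt hI hfin s (diagJ 𝒪 I (↑u))) := by
      rw [ψ_def, QuotientGroup.lift_mk', psi0_apply]
    rw [e2]
    have hau : auU hI (diagJ 𝒪 I (↑u)) = (u : 𝒪ˣ) := by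
      apply Units.ext
      rw [auU_spec]
      simp [diagJ, diagSL]
    have e3 : pqElt hI hfin s (diagJ 𝒪 I (↑u)) =
        u ^ ((Nat.card (ResidueField 𝒪) - 1) * s) := by
      apply Subtype.ext
      rw [pqElt_coe, hau, SubmonoidClass.coe_pow, ← pow_mul]
    rw [e3, QuotientGroup.eq]
    refine Subgroup.mem_subgroupOf.mpr (Subgroup.mem_sup_right ?_)
    refine Subgroup.mem_map.mpr ⟨((u : 𝒪ˣ))⁻¹ ^ t,
      Subgroup.pow_mem _ (Subgroup.inv_mem _ u.2) t, ?_⟩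
    have hXe : (u ^ ((Nat.card (ResidueField 𝒪) - 1) * s))⁻¹ * u = ((u⁻¹) ^ t) ^ p := by
      rw [hst]; group
    rw [hXe]
    simp [powMonoidHom_apply, SubmonoidClass.coe_pow]
  have h2 : φ.comp ψ = MonoidHom.id _ := by
    apply MonoidHom.ext
    intro y
    refine QuotientGroup.induction_on y fun g => ?_
    rw [MonoidHom.comp_apply, MonoidHom.id_apply]
    have e1 : ψ (QuotientGroup.mk g) = QuotientGroup.mk (pqElt hI hfin s g) := by
      rw [ψ_def, QuotientGroup.lift_mk', psi0_apply]
    have e2 : φ (QuotientGroup.mk (pqElt hI hfin s g)) =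
        QuotientGroup.mk (diagJ 𝒪 I (↑(pqElt hI hfin s g))) := by
      rw [φ_def, QuotientGroup.lift_mk', hom1_apply]
    rw [e1, e2]
    have e3 : diagJ 𝒪 I (↑(pqElt hI hfin s g)) =
        (diagJ 𝒪 I (auU hI g)) ^ ((Nat.card (ResidueField 𝒪) - 1) * s) := by
      rw [pqElt_coe, ← pow_mul]
      exact map_pow (dHom 𝒪 I) _ _
    rw [e3, QuotientGroup.eq]
    have m2 : (diagJ 𝒪 I (auU hI g))⁻¹ * g ∈ frattiniP (↥(lowerCong 𝒪 I)) p :=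
      QuotientGroup.eq.mp (key1 g).symm
    have hXe : ((diagJ 𝒪 I (auU hI g)) ^ ((Nat.card (ResidueField 𝒪) - 1) * s))⁻¹ * g =
        (((diagJ 𝒪 I (auU hI g))⁻¹ ^ t) ^ p) * ((diagJ 𝒪 I (auU hI g))⁻¹ * g) := by
      rw [hst]; group
    rw [hXe]
    exact Subgroup.mul_mem _ (pow_mem_phi p _) m2
  refine ⟨MonoidHom.toMulEquiv φ ψ h1 h2, fun u => ?_⟩
  show φ (QuotientGroup.mk u) = _
  rw [φ_def, QuotientGroup.lift_mk', hom1_apply]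


end S19

/-- let `𝒪` be the ring of integers of a finite extension of `ℚ_p`
(modelled as a discrete valuation ring with residue characteristic `p` and residue field of
cardinality `q > 3`).  For `n ≥ 1`, the Frattini quotient of
`Jₙ⁺ = (𝒪ˣ, 𝒪; 𝔐^(n+1), 𝒪ˣ) ∩ SL₂(𝒪)` is isomorphic, as a group, to
`(1+𝔐)/((1+𝔐^(n+1))(1+𝔐)ᵖ)` via the map induced by `t ↦ diag(t, t⁻¹)`.
In particular for `n = 0` (the Iwahori subgroup `J = J₀⁺`), the Frattini quotient is
trivial. -/
theorem stmt19 (𝒪 : Type*) [CommRing 𝒪] [IsDomain 𝒪] [IsDiscreteValuationRing 𝒪]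
    (p : ℕ) (hp : p.Prime) (hchar : CharP (ResidueField 𝒪) p)
    (hq : 3 < Nat.card (ResidueField 𝒪)) :
    (∀ n : ℕ, 1 ≤ n →
      ∃ e : (↥(principalUnits 𝒪 (maximalIdeal 𝒪)) ⧸
          ((principalUnits 𝒪 (maximalIdeal 𝒪 ^ (n + 1)) ⊔
            (principalUnits 𝒪 (maximalIdeal 𝒪)).map (powMonoidHom p)).subgroupOf
            (principalUnits 𝒪 (maximalIdeal 𝒪)))) ≃*
        (↥(lowerCong 𝒪 (maximalIdeal 𝒪 ^ (n + 1))) ⧸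
          frattiniP (↥(lowerCong 𝒪 (maximalIdeal 𝒪 ^ (n + 1)))) p),
        ∀ u : ↥(principalUnits 𝒪 (maximalIdeal 𝒪)),
          e (QuotientGroup.mk u) =
            QuotientGroup.mk (diagJ 𝒪 (maximalIdeal 𝒪 ^ (n + 1)) (↑u))) ∧
    (∀ x : (↥(lowerCong 𝒪 (maximalIdeal 𝒪 ^ (0 + 1))) ⧸
        frattiniP (↥(lowerCong 𝒪 (maximalIdeal 𝒪 ^ (0 + 1)))) p), x = 1) := by
  constructor
  · intro n _
    exact S19.core (maximalIdeal 𝒪 ^ (n + 1)) (Ideal.pow_le_self (by omega)) p hp hchar hq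
  · obtain ⟨e, he⟩ :=
      S19.core (maximalIdeal 𝒪 ^ (0 + 1)) (Ideal.pow_le_self (by omega)) p hp hchar hq
    intro xx
    have h1 : ∀ qq : (↥(principalUnits 𝒪 (maximalIdeal 𝒪)) ⧸
        ((principalUnits 𝒪 (maximalIdeal 𝒪 ^ (0 + 1)) ⊔
          (principalUnits 𝒪 (maximalIdeal 𝒪)).map (powMonoidHom p)).subgroupOf
          (principalUnits 𝒪 (maximalIdeal 𝒪)))), qq = 1 := by
      intro qq
      refine QuotientGroup.induction_on qq fun u => ?_
      rw [QuotientGroup.eq_one_iff]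
      refine Subgroup.mem_subgroupOf.mpr (Subgroup.mem_sup_left ?_)
      rw [S19.mem_principalUnits_iff,
        show (maximalIdeal 𝒪) ^ (0 + 1) = maximalIdeal 𝒪 from by rw [zero_add, pow_one]]
      exact S19.mem_principalUnits_iff.mp u.2
    calc xx = e (e.symm xx) := (e.apply_symm_apply xx).symm
      _ = e 1 := by rw [h1 (e.symm xx)]
      _ = 1 := map_one e
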